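/- Let g and g^ε belong to L²_μ(0,1), where dμ(x) = dx/√(x(1−x)), and let cₙ and cₙ^ε be the Legendre coefficients obtained via the Fourier coefficients of the auxiliary functions η and η^ε built from g and g^ε respectively, i.e. cₙ = (−1)ⁿ√(2n+1) ∫_{−π}^{π} η(t) e^{int} dt with η(t) = (sgn(t)/(2πi)) e^{it/2} g(sin²(t/2)). Then for every n ≥ 0, |cₙ − cₙ^ε| ≤ √((2n+1)/π) · ‖g − g^ε‖_{L²_μ(0,1)}. -/

import Mathlib

open MeasureTheory Real Filter

/-- The weighted measure `dμ(x) = dx/√(x(1−x))` on `(0,1)`. -/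
noncomputable def muMeas : Measure ℝ :=
  (volume.restrict (Set.Ioo 0 1)).withDensity
    (fun x => ENNReal.ofReal (1 / Real.sqrt (x * (1 - x))))

/-- The auxiliary function `η(t) = (sgn t/(2πi)) e^{it/2} g(sin²(t/2))` on `[-π,π)`. -/
noncomputable def eta0 (g : ℝ → ℝ) (t : ℝ) : ℂ :=
  ((Real.sign t : ℂ) / (2 * (π:ℂ) * Complex.I)) * Complex.exp (Complex.I * (t:ℂ) / 2) *
    (g (Real.sin (t/2)^2) : ℂ)

/-- The `2π`-periodic extension of `eta0 g` from `[-π,π)` to all of `ℝ`. -/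
noncomputable def etaP (g : ℝ → ℝ) (t : ℝ) : ℂ :=
  eta0 g (toIcoMod Real.two_pi_pos (-π) t)

section helperLemmas
open Set
private lemma phi_hasDerivAt (t : ℝ) :
    HasDerivAt (fun t : ℝ => Real.sin (t/2)^2) (Real.sin (t/2) * Real.cos (t/2)) t := by
  have h1 : HasDerivAt (fun t : ℝ => t/2) (1/2) t := (hasDerivAt_id t).div_const 2
  have h2 : HasDerivAt (fun t : ℝ => Real.sin (t/2)) (Real.cos (t/2) * (1/2)) t :=
    h1.sin
  have h3 := h2.fun_pow 2
  refine h3.congr_deriv ?_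
  ring

private lemma sin_half_pos {t : ℝ} (ht : t ∈ Ioo 0 π) : 0 < Real.sin (t/2) :=
  Real.sin_pos_of_pos_of_lt_pi (by linarith [ht.1]) (by linarith [ht.2, pi_pos])

private lemma sin_half_lt_one {t : ℝ} (ht : t ∈ Ioo 0 π) : Real.sin (t/2) < 1 := by
  have h := Real.sin_lt_sin_of_lt_of_le_pi_div_two (x := t/2) (y := π/2)
    (by linarith [ht.1, pi_pos]) (le_refl _) (by linarith [ht.2])
  rwa [Real.sin_pi_div_two] at h

private lemma phi_mem {t : ℝ} (ht : t ∈ Ioo 0 π) : Real.sin (t/2)^2 ∈ Ioo 0 1 :=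
  ⟨pow_pos (sin_half_pos ht) 2,
   pow_lt_one₀ (sin_half_pos ht).le (sin_half_lt_one ht) two_ne_zero⟩

private lemma phi_inj : InjOn (fun t : ℝ => Real.sin (t/2)^2) (Ioo 0 π) := by
  intro a ha b hb hab
  simp only at hab
  have hsa := sin_half_pos ha
  have hsb := sin_half_pos hb
  have h1 : Real.sin (a/2) = Real.sin (b/2) := by nlinarith
  have h2 := Real.injOn_sin (show a/2 ∈ Icc (-(π/2)) (π/2) from
      ⟨by linarith [ha.1, pi_pos], by linarith [ha.2]⟩)
    (show b/2 ∈ Icc (-(π/2)) (π/2) from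
      ⟨by linarith [hb.1, pi_pos], by linarith [hb.2]⟩) h1
  linarith

private lemma phi_image : (fun t : ℝ => Real.sin (t/2)^2) '' (Ioo 0 π) = Ioo 0 1 := by
  apply Subset.antisymm
  · rintro x ⟨t, ht, rfl⟩; exact phi_mem ht
  · rintro x hx
    refine ⟨2 * Real.arcsin (Real.sqrt x), ⟨?_, ?_⟩, ?_⟩
    · have := Real.arcsin_pos.2 (Real.sqrt_pos.2 hx.1); linarith
    · have h1 : Real.sqrt x < 1 := by
        rw [show (1:ℝ) = Real.sqrt 1 by simp]
        exact Real.sqrt_lt_sqrt hx.1.le hx.2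
      have := Real.arcsin_lt_pi_div_two.2 h1
      linarith
    · simp only
      rw [show 2 * Real.arcsin (Real.sqrt x) / 2 = Real.arcsin (Real.sqrt x) by ring,
        Real.sin_arcsin (by linarith [Real.sqrt_nonneg x]) (by
          rw [show (1:ℝ) = Real.sqrt 1 by simp]
          exact Real.sqrt_le_sqrt hx.2.le), Real.sq_sqrt hx.1.le]

private lemma cos_half_pos {t : ℝ} (ht : t ∈ Ioo (-π) π) : 0 < Real.cos (t/2) :=
  Real.cos_pos_of_mem_Ioo ⟨by linarith [ht.1], by linarith [ht.2]⟩

private lemma keyCV (f : ℝ → ℝ)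
    (hInt : IntegrableOn (fun x => f x^2 / Real.sqrt (x*(1-x))) (Ioo 0 1) volume) :
    IntegrableOn (fun t => f (Real.sin (t/2)^2)^2) (Ioo 0 π) volume ∧
    ∫ t in Ioo 0 π, f (Real.sin (t/2)^2)^2
      = ∫ x in Ioo 0 1, f x^2 / Real.sqrt (x*(1-x)) := by
  have hd : ∀ t ∈ Ioo 0 π, HasDerivWithinAt (fun t : ℝ => Real.sin (t/2)^2)
      (Real.sin (t/2) * Real.cos (t/2)) (Ioo 0 π) t :=
    fun t _ => (phi_hasDerivAt t).hasDerivWithinAt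
  have key : ∀ t ∈ Ioo 0 π,
      |Real.sin (t/2) * Real.cos (t/2)| •
        (f (Real.sin (t/2)^2)^2 / Real.sqrt (Real.sin (t/2)^2 * (1 - Real.sin (t/2)^2)))
        = f (Real.sin (t/2)^2)^2 := by
    intro t ht
    have hu : 0 < Real.sin (t/2) := sin_half_pos ht
    have hv : 0 < Real.cos (t/2) := cos_half_pos ⟨by linarith [ht.1, pi_pos], ht.2⟩
    have h1 : 1 - Real.sin (t/2)^2 = Real.cos (t/2)^2 := by
      have := Real.sin_sq_add_cos_sq (t/2); linarith
    rw [h1, smul_eq_mul,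
      show Real.sin (t/2)^2 * Real.cos (t/2)^2 = (Real.sin (t/2) * Real.cos (t/2))^2 by ring,
      Real.sqrt_sq (by positivity), abs_of_pos (by positivity)]
    field_simp
  constructor
  · have h2 := (integrableOn_image_iff_integrableOn_abs_deriv_smul measurableSet_Ioo hd phi_inj
      (fun x => f x^2 / Real.sqrt (x*(1-x)))).1 (by rwa [phi_image])
    exact h2.congr_fun (fun t ht => key t ht) measurableSet_Ioo
  · have h3 := integral_image_eq_integral_abs_deriv_smul measurableSet_Ioo hd phi_inj
      (fun x => f x^2 / Real.sqrt (x*(1-x)))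
    rw [phi_image] at h3
    calc ∫ t in Ioo 0 π, f (Real.sin (t/2)^2)^2
        = ∫ t in Ioo 0 π, |Real.sin (t/2) * Real.cos (t/2)| •
            (f (Real.sin (t/2)^2)^2 / Real.sqrt (Real.sin (t/2)^2 * (1 - Real.sin (t/2)^2))) :=
          (setIntegral_congr_fun measurableSet_Ioo (fun t ht => (key t ht).symm))
      _ = ∫ x in Ioo 0 1, f x^2 / Real.sqrt (x*(1-x)) := h3.symm

private lemma sin_sq_neg (t : ℝ) : Real.sin (-t/2)^2 = Real.sin (t/2)^2 := by
  rw [neg_div, Real.sin_neg, neg_sq]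

private lemma heven (f : ℝ → ℝ) (t : ℝ) : f (Real.sin (-t/2)^2) = f (Real.sin (t/2)^2) := by
  rw [sin_sq_neg]

private lemma keyFull (f : ℝ → ℝ)
    (hInt : IntegrableOn (fun x => f x^2 / Real.sqrt (x*(1-x))) (Ioo 0 1) volume) :
    IntegrableOn (fun t => f (Real.sin (t/2)^2)^2) (Ioo (-π) π) volume ∧
    ∫ t in Ioo (-π) π, f (Real.sin (t/2)^2)^2
      = 2 * ∫ x in Ioo 0 1, f x^2 / Real.sqrt (x*(1-x)) := by
  obtain ⟨hI, hE⟩ := keyCV f hInt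
  have hsymm : ∀ t : ℝ, f (Real.sin (-t/2)^2)^2 = f (Real.sin (t/2)^2)^2 :=
    fun t => heven (fun x => f x ^ 2) t
  have hIoc : IntervalIntegrable (fun t => f (Real.sin (t/2)^2)^2) volume 0 π :=
    (intervalIntegrable_iff_integrableOn_Ioo_of_le pi_pos.le).2 hI
  have hneg : IntervalIntegrable (fun t => f (Real.sin (t/2)^2)^2) volume (-π) 0 := by
    have h2 := (IntervalIntegrable.iff_comp_neg (f := fun t => f (Real.sin (t/2)^2)^2) (a := 0) (b := π)).1 hIoc
    simp only [hsymm, neg_zero] at h2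
    exact h2.symm
  have hnegint : (∫ t in (-π)..(0:ℝ), f (Real.sin (t/2)^2)^2)
      = ∫ t in (0:ℝ)..π, f (Real.sin (t/2)^2)^2 := by
    have h3 := intervalIntegral.integral_comp_neg (a := (0:ℝ)) (b := π)
      (fun t => f (Real.sin (t/2)^2)^2)
    simp only [hsymm, neg_zero] at h3
    exact h3.symm
  have hdisj : Disjoint (Ioo (-π) (0:ℝ)) (Ioo (0:ℝ) π) :=
    Set.disjoint_left.2 (fun x hx1 hx2 => absurd hx1.2 (not_lt.2 hx2.1.le))
  have hae : Ioo (-π) π =ᵐ[volume] (Ioo (-π) 0 ∪ Ioo 0 π : Set ℝ) := by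
    have h0 : volume ({(0:ℝ)} : Set ℝ) = 0 := measure_singleton 0
    rw [Filter.eventuallyEq_set, ae_iff]
    apply measure_mono_null ?_ h0
    intro x hx
    simp only [mem_setOf_eq, mem_union, mem_Ioo] at hx
    simp only [mem_singleton_iff]
    by_contra hne
    apply hx
    constructor
    · rintro ⟨h1, h2⟩
      rcases (Ne.lt_or_gt hne) with h|h
      · exact Or.inl ⟨h1, h⟩
      · exact Or.inr ⟨h, h2⟩
    · rintro (⟨h1, h2⟩|⟨h1, h2⟩)
      · exact ⟨h1, by linarith [pi_pos]⟩
      · exact ⟨by linarith [pi_pos], h2⟩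
  have hIneg : IntegrableOn (fun t => f (Real.sin (t/2)^2)^2) (Ioo (-π) 0) volume :=
    (intervalIntegrable_iff_integrableOn_Ioo_of_le (by linarith [pi_pos] : -π ≤ (0:ℝ))).1 hneg
  constructor
  · rw [IntegrableOn, Measure.restrict_congr_set hae]
    exact hIneg.union hI
  · rw [setIntegral_congr_set hae,
      setIntegral_union hdisj measurableSet_Ioo hIneg hI]
    have e1 : ∫ t in Ioo (-π) (0:ℝ), f (Real.sin (t/2)^2)^2
        = ∫ t in Ioo (0:ℝ) π, f (Real.sin (t/2)^2)^2 := by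
      rw [← integral_Ioc_eq_integral_Ioo, ← integral_Ioc_eq_integral_Ioo,
        ← intervalIntegral.integral_of_le (by linarith [pi_pos] : -π ≤ (0:ℝ)),
        ← intervalIntegral.integral_of_le pi_pos.le]
      exact hnegint
    rw [e1, hE]
    ring

private lemma w_meas : Measurable (fun x : ℝ => ENNReal.ofReal (1 / Real.sqrt (x * (1 - x)))) := by
  apply Measurable.ennreal_ofReal
  exact measurable_const.div
    (Real.continuous_sqrt.measurable.comp (measurable_id.mul (measurable_const.sub measurable_id)))

private lemma ae_restrict_of_mu {f f' : ℝ → ℝ} (h : f =ᵐ[muMeas] f') :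
    f =ᵐ[volume.restrict (Set.Ioo 0 1)] f' := by
  have h2 : ∀ᵐ x ∂(volume.restrict (Set.Ioo 0 1)),
      ENNReal.ofReal (1 / Real.sqrt (x * (1-x))) ≠ 0 → f x = f' x := (ae_withDensity_iff w_meas).1 h
  filter_upwards [h2, ae_restrict_mem measurableSet_Ioo] with x hx hmem
  apply hx
  simp only [ne_eq, ENNReal.ofReal_eq_zero, not_le]
  have h01 : 0 < x*(1-x) := by nlinarith [hmem.1, hmem.2]
  exact div_pos one_pos (Real.sqrt_pos.2 h01)

private lemma integrableOn_of_memLp {f : ℝ → ℝ} (hf : MemLp f 2 muMeas) :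
    IntegrableOn (fun x => f x^2 / Real.sqrt (x*(1-x))) (Set.Ioo 0 1) volume := by
  have h1 : Integrable (fun x => f x^2)
      ((volume.restrict (Set.Ioo 0 1)).withDensity
        (fun x => ENNReal.ofReal (1 / Real.sqrt (x * (1 - x))))) := hf.integrable_sq
  have hlt : ∀ᵐ x ∂(volume.restrict (Set.Ioo (0:ℝ) 1)),
      ENNReal.ofReal (1 / Real.sqrt (x*(1-x))) < ⊤ :=
    Filter.Eventually.of_forall (fun x => ENNReal.ofReal_lt_top)
  have h2 := (integrable_withDensity_iff w_meas hlt).1 h1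
  have h3 : ∀ x : ℝ, f x^2 * (ENNReal.ofReal (1 / Real.sqrt (x*(1-x)))).toReal
      = f x^2 / Real.sqrt (x*(1-x)) := by
    intro x
    rw [ENNReal.toReal_ofReal (div_nonneg zero_le_one (Real.sqrt_nonneg _))]
    ring
  simp only [h3] at h2
  exact h2

private lemma ae_comp_eq (f f' : ℝ → ℝ)
    (h : f =ᵐ[volume.restrict (Ioo 0 1)] f') :
    (fun t => f (Real.sin (t/2)^2)) =ᵐ[volume.restrict (Ioo (-π) π)]
      (fun t => f' (Real.sin (t/2)^2)) := by
  have h0 : volume ({x | f x ≠ f' x} ∩ Ioo 0 1) = 0 := by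
    have h1 := ae_iff.1 h
    rwa [Measure.restrict_apply' measurableSet_Ioo] at h1
  obtain ⟨N0, hN0sub, hN0meas, hN0⟩ := exists_measurable_superset_of_null h0
  set N : Set ℝ := N0 ∩ Ioo 0 1 with hNdef
  have hNmeas : MeasurableSet N := hN0meas.inter measurableSet_Ioo
  have hNnull : volume N = 0 := measure_mono_null inter_subset_left hN0
  have hNsub : N ⊆ Ioo 0 1 := inter_subset_right
  have hNprop : ∀ x ∈ Ioo (0:ℝ) 1, x ∉ N → f x = f' x := by
    intro x hx hxN
    by_contra hne
    exact hxN ⟨hN0sub ⟨hne, hx⟩, hx⟩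
  set G : ℝ → ℝ := N.indicator (fun _ => (1:ℝ)) with hG
  have hd : ∀ t ∈ Ioo 0 π, HasDerivWithinAt (fun t : ℝ => Real.sin (t/2)^2)
      (Real.sin (t/2) * Real.cos (t/2)) (Ioo 0 π) t :=
    fun t _ => (phi_hasDerivAt t).hasDerivWithinAt
  have hint : ∫ x in Ioo 0 1, G x
      = ∫ t in Ioo 0 π, |Real.sin (t/2) * Real.cos (t/2)| • G (Real.sin (t/2)^2) := by
    rw [← phi_image]
    exact integral_image_eq_integral_abs_deriv_smul measurableSet_Ioo hd phi_inj G
  have hGzero : ∫ x in Ioo 0 1, G x = 0 := by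
    rw [hG, MeasureTheory.integral_indicator hNmeas, Measure.restrict_restrict hNmeas,
      MeasureTheory.setIntegral_const]
    simp [Measure.real, measure_mono_null Set.inter_subset_left hNnull]
  have hGint : IntegrableOn G (Ioo 0 1) volume := by
    have hae0 : G =ᵐ[volume.restrict (Ioo 0 1)] (fun _ => (0:ℝ)) := by
      apply ae_restrict_of_ae
      rw [ae_iff]
      apply measure_mono_null ?_ hNnull
      intro x hx
      simp only [mem_setOf_eq] at hx
      by_contra hxN
      exact hx (by simp [hG, Set.indicator_of_notMem hxN])
    exact (integrable_zero _ _ _).congr hae0.symm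
  have hpull : IntegrableOn
      (fun t => |Real.sin (t/2) * Real.cos (t/2)| • G (Real.sin (t/2)^2)) (Ioo 0 π) volume :=
    (integrableOn_image_iff_integrableOn_abs_deriv_smul measurableSet_Ioo hd phi_inj G).1
      (by rwa [phi_image])
  have hzero2 : ∫ t in Ioo 0 π, |Real.sin (t/2) * Real.cos (t/2)| • G (Real.sin (t/2)^2) = 0 := by
    rw [← hint, hGzero]
  have hnn : 0 ≤ (fun t => |Real.sin (t/2) * Real.cos (t/2)| • G (Real.sin (t/2)^2)) := by
    intro t
    simp only [smul_eq_mul, Pi.zero_apply]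
    exact mul_nonneg (abs_nonneg _) (Set.indicator_nonneg (fun _ _ => zero_le_one) _)
  have hae0' := (integral_eq_zero_iff_of_nonneg hnn hpull).1 hzero2
  have haeN : ∀ᵐ t ∂(volume.restrict (Ioo 0 π)), Real.sin (t/2)^2 ∉ N := by
    filter_upwards [hae0', ae_restrict_mem measurableSet_Ioo] with t h1 h2
    intro hmem
    have hu : 0 < Real.sin (t/2) := sin_half_pos h2
    have hv : 0 < Real.cos (t/2) := cos_half_pos ⟨by linarith [h2.1, pi_pos], h2.2⟩
    simp only [Pi.zero_apply, smul_eq_mul, hG, Set.indicator_of_mem hmem, mul_one,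
      abs_eq_zero] at h1
    nlinarith [mul_pos hu hv]
  have hSpos : volume ({t : ℝ | Real.sin (t/2)^2 ∈ N} ∩ Ioo 0 π) = 0 := by
    have h1 := ae_iff.1 haeN
    simp only [not_not] at h1
    rwa [Measure.restrict_apply' measurableSet_Ioo] at h1
  have hSneg : volume ({t : ℝ | Real.sin (t/2)^2 ∈ N} ∩ Ioo (-π) 0) = 0 := by
    have hseteq : {t : ℝ | Real.sin (t/2)^2 ∈ N} ∩ Ioo (-π) 0
        = -({t : ℝ | Real.sin (t/2)^2 ∈ N} ∩ Ioo 0 π) := by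
      ext t
      simp only [Set.mem_inter_iff, Set.mem_setOf_eq, Set.mem_neg, Set.mem_Ioo]
      constructor
      · rintro ⟨h1, h2, h3⟩
        refine ⟨?_, by linarith, by linarith⟩
        rw [sin_sq_neg t]
        exact h1
      · rintro ⟨h1, h2, h3⟩
        refine ⟨?_, by linarith, by linarith⟩
        rwa [sin_sq_neg t] at h1
    rw [hseteq, Measure.measure_neg]
    exact hSpos
  have goal2 : ∀ᵐ t ∂(volume.restrict (Ioo (-π) π)),
      f (Real.sin (t/2)^2) = f' (Real.sin (t/2)^2) := ?_
  · exact goal2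
  rw [ae_restrict_iff' measurableSet_Ioo, ae_iff]
  apply measure_mono_null
    (?_ : _ ⊆ ({t : ℝ | Real.sin (t/2)^2 ∈ N} ∩ Ioo 0 π)
      ∪ (({t : ℝ | Real.sin (t/2)^2 ∈ N} ∩ Ioo (-π) 0) ∪ {(0:ℝ)}))
  · exact measure_union_null hSpos (measure_union_null hSneg (measure_singleton 0))
  · intro t ht
    simp only [mem_setOf_eq] at ht
    push_neg at ht
    obtain ⟨htmem, htne⟩ := ht
    by_cases ht0 : t = 0
    · exact Or.inr (Or.inr ht0)
    have hphi : Real.sin (t/2)^2 ∈ Ioo (0:ℝ) 1 := by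
      rcases (Ne.lt_or_gt ht0) with h|h
      · have := phi_mem (t := -t) ⟨by linarith, by linarith [htmem.1]⟩
        rwa [sin_sq_neg t] at this
      · exact phi_mem ⟨h, htmem.2⟩
    have htN : Real.sin (t/2)^2 ∈ N := by
      by_contra hnot
      exact htne (hNprop _ hphi hnot)
    rcases (Ne.lt_or_gt ht0) with h|h
    · exact Or.inr (Or.inl ⟨htN, htmem.1, h⟩)
    · exact Or.inl ⟨htN, h, htmem.2⟩

private lemma abs_sign_le (t : ℝ) : |Real.sign t| ≤ 1 := by
  rcases lt_trichotomy t 0 with h|h|h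
  · rw [Real.sign_of_neg h]; norm_num
  · rw [h, Real.sign_zero]; norm_num
  · rw [Real.sign_of_pos h]; norm_num

private lemma measurable_sign : Measurable Real.sign := by
  unfold Real.sign
  exact Measurable.ite (measurableSet_lt measurable_id measurable_const) measurable_const
    (Measurable.ite (measurableSet_lt measurable_const measurable_id) measurable_const
      measurable_const)

private lemma norm_exp_I_half (t : ℝ) : ‖Complex.exp (Complex.I * (t:ℂ) / 2)‖ = 1 := by
  rw [Complex.norm_exp]
  have : (Complex.I * (t:ℂ) / 2).re = 0 := by simp
  rw [this, Real.exp_zero]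

private lemma norm_exp_I_nt (n : ℕ) (t : ℝ) : ‖Complex.exp (Complex.I * (n:ℂ) * (t:ℂ))‖ = 1 := by
  rw [Complex.norm_exp]
  have : (Complex.I * (n:ℂ) * (t:ℂ)).re = 0 := by simp
  rw [this, Real.exp_zero]

private lemma toIcoMod_self_of_mem {t : ℝ} (ht : t ∈ Ioo (-π) π) :
    toIcoMod Real.two_pi_pos (-π) t = t :=
  (toIcoMod_eq_self _).2 ⟨ht.1.le, by linarith [ht.2]⟩

private lemma eta_term_bound (f : ℝ → ℝ) (n : ℕ) {t : ℝ} (ht : t ∈ Ioo (-π) π) :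
    ‖etaP f t * Complex.exp (Complex.I * (n:ℂ) * (t:ℂ))‖
      ≤ 1/(2*π) * |f (Real.sin (t/2)^2)| := by
  unfold etaP eta0
  rw [toIcoMod_self_of_mem ht]
  rw [norm_mul, norm_mul, norm_mul, norm_div, norm_exp_I_half, norm_exp_I_nt]
  have hB : ‖(2 * (π:ℂ) * Complex.I)‖ = 2*π := by
    rw [norm_mul, norm_mul, Complex.norm_I, mul_one]
    simp [Complex.norm_real, abs_of_pos pi_pos]
  have hA : ‖((Real.sign t : ℝ) : ℂ)‖ = |Real.sign t| := by
    rw [Complex.norm_real, Real.norm_eq_abs]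
  have hF : ‖((f (Real.sin (t/2)^2) : ℝ) : ℂ)‖ = |f (Real.sin (t/2)^2)| := by
    rw [Complex.norm_real, Real.norm_eq_abs]
  rw [hB, hA, hF, mul_one, mul_one]
  exact mul_le_mul_of_nonneg_right ((div_le_div_iff_of_pos_right (by positivity)).2 (abs_sign_le t))
    (abs_nonneg _)

private lemma eta_term_sub (f f₀ : ℝ → ℝ) (n : ℕ) {t : ℝ} (ht : t ∈ Ioo (-π) π) :
    ‖etaP f t * Complex.exp (Complex.I * (n:ℂ) * (t:ℂ))
        - etaP f₀ t * Complex.exp (Complex.I * (n:ℂ) * (t:ℂ))‖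
      ≤ 1/(2*π) * |f (Real.sin (t/2)^2) - f₀ (Real.sin (t/2)^2)| := by
  have heq : etaP f t * Complex.exp (Complex.I * (n:ℂ) * (t:ℂ))
        - etaP f₀ t * Complex.exp (Complex.I * (n:ℂ) * (t:ℂ))
      = etaP (fun x => f x - f₀ x) t * Complex.exp (Complex.I * (n:ℂ) * (t:ℂ)) := by
    unfold etaP eta0
    push_cast
    ring
  rw [heq]
  exact eta_term_bound (fun x => f x - f₀ x) n ht

private lemma abs_comp_integrable (f₀ : ℝ → ℝ) (hf₀ : Measurable f₀)
    (hint2 : IntegrableOn (fun t => f₀ (Real.sin (t/2)^2)^2) (Ioo (-π) π) volume) :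
    MemLp (fun t => f₀ (Real.sin (t/2)^2)) 2 (volume.restrict (Ioo (-π) π)) ∧
    Integrable (fun t => |f₀ (Real.sin (t/2)^2)|) (volume.restrict (Ioo (-π) π)) := by
  haveI : IsFiniteMeasure (volume.restrict (Ioo (-π) π)) :=
    ⟨by rw [Measure.restrict_apply_univ]; exact measure_Ioo_lt_top⟩
  have hφm : Measurable (fun t : ℝ => Real.sin (t/2)^2) :=
    ((Real.continuous_sin.comp (continuous_id.div_const 2)).pow 2).measurable
  have hcomp : Measurable (fun t => f₀ (Real.sin (t/2)^2)) := hf₀.comp hφm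
  have hmem2 : MemLp (fun t => f₀ (Real.sin (t/2)^2)) 2 (volume.restrict (Ioo (-π) π)) :=
    (memLp_two_iff_integrable_sq hcomp.aestronglyMeasurable).2 hint2
  exact ⟨hmem2, (memLp_one_iff_integrable.1 (hmem2.mono_exponent one_le_two)).abs⟩

private lemma integrable_term (f f₀ : ℝ → ℝ) (n : ℕ) (hf₀ : Measurable f₀)
    (hae : (fun t => f (Real.sin (t/2)^2)) =ᵐ[volume.restrict (Ioo (-π) π)]
      (fun t => f₀ (Real.sin (t/2)^2)))
    (hint2 : IntegrableOn (fun t => f₀ (Real.sin (t/2)^2)^2) (Ioo (-π) π) volume) :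
    IntegrableOn (fun t => etaP f t * Complex.exp (Complex.I * (n:ℂ) * (t:ℂ)))
      (Ioo (-π) π) volume := by
  obtain ⟨hmem2, hint1⟩ := abs_comp_integrable f₀ hf₀ hint2
  have hφm : Measurable (fun t : ℝ => Real.sin (t/2)^2) :=
    ((Real.continuous_sin.comp (continuous_id.div_const 2)).pow 2).measurable
  have hbound : Integrable (fun t => 1/(2*π) * |f₀ (Real.sin (t/2)^2)|)
      (volume.restrict (Ioo (-π) π)) := hint1.const_mul _
  have hMm : Measurable (fun t : ℝ =>
      ((Real.sign t : ℂ) / (2 * (π:ℂ) * Complex.I)) * Complex.exp (Complex.I * (t:ℂ) / 2) *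
        ((f₀ (Real.sin (t/2)^2) : ℝ) : ℂ) * Complex.exp (Complex.I * (n:ℂ) * (t:ℂ))) := by
    have m1 : Measurable (fun t : ℝ => ((Real.sign t : ℝ) : ℂ)) :=
      Complex.measurable_ofReal.comp measurable_sign
    have me1 : Measurable (fun t : ℝ => Complex.exp (Complex.I * (t:ℂ) / 2)) :=
      (Complex.continuous_exp.comp (by continuity)).measurable
    have me2 : Measurable (fun t : ℝ => Complex.exp (Complex.I * (n:ℂ) * (t:ℂ))) :=
      (Complex.continuous_exp.comp (by continuity)).measurable
    have mF : Measurable (fun t : ℝ => ((f₀ (Real.sin (t/2)^2) : ℝ) : ℂ)) :=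
      Complex.measurable_ofReal.comp (hf₀.comp hφm)
    exact (((m1.div_const _).mul me1).mul mF).mul me2
  have haesm : AEStronglyMeasurable
      (fun t => etaP f t * Complex.exp (Complex.I * (n:ℂ) * (t:ℂ)))
      (volume.restrict (Ioo (-π) π)) := by
    apply AEStronglyMeasurable.congr hMm.aestronglyMeasurable
    filter_upwards [hae, ae_restrict_mem measurableSet_Ioo] with t h1 h2
    unfold etaP eta0
    rw [toIcoMod_self_of_mem h2, h1]
  apply Integrable.mono' hbound haesm
  filter_upwards [hae, ae_restrict_mem measurableSet_Ioo] with t h1 h2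
  exact le_of_le_of_eq (eta_term_bound f n h2) (by rw [h1])

private lemma cauchy_schwarz_step (f₀ : ℝ → ℝ) (hf₀ : Measurable f₀)
    (hint2 : IntegrableOn (fun t => f₀ (Real.sin (t/2)^2)^2) (Ioo (-π) π) volume) :
    ∫ t in Ioo (-π) π, |f₀ (Real.sin (t/2)^2)|
      ≤ Real.sqrt (2*π) * Real.sqrt (∫ t in Ioo (-π) π, f₀ (Real.sin (t/2)^2)^2) := by
  haveI : IsFiniteMeasure (volume.restrict (Ioo (-π) π)) :=
    ⟨by rw [Measure.restrict_apply_univ]; exact measure_Ioo_lt_top⟩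
  obtain ⟨hmem2, -⟩ := abs_comp_integrable f₀ hf₀ hint2
  have hpq : Real.HolderConjugate 2 2 := Real.HolderConjugate.two_two
  have h2 : (ENNReal.ofReal 2) = (2 : ENNReal) := by norm_num
  have hf : MemLp (fun t => |f₀ (Real.sin (t/2)^2)|) (ENNReal.ofReal 2)
      (volume.restrict (Ioo (-π) π)) := by rw [h2]; exact hmem2.abs
  have hg : MemLp (fun _ : ℝ => (1:ℝ)) (ENNReal.ofReal 2)
      (volume.restrict (Ioo (-π) π)) := by rw [h2]; exact memLp_const 1
  have hCS := integral_mul_le_Lp_mul_Lq_of_nonneg hpq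
    (Filter.Eventually.of_forall (fun t => abs_nonneg _))
    (Filter.Eventually.of_forall (fun _ => zero_le_one)) hf hg
  simp only [mul_one] at hCS
  have e1 : ∫ t in Ioo (-π) π, |f₀ (Real.sin (t/2)^2)| ^ (2:ℝ)
      = ∫ t in Ioo (-π) π, f₀ (Real.sin (t/2)^2)^2 := by
    have hx : ∀ x : ℝ, |x| ^ (2:ℝ) = x^2 := fun x => by
      rw [show |x| ^ (2:ℝ) = |x| ^ ((2:ℕ):ℝ) by norm_num, Real.rpow_natCast, sq_abs]
    exact integral_congr_ae (Filter.Eventually.of_forall (fun t => hx _))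
  have e2 : ∫ _t in Ioo (-π) π, (1:ℝ) ^ (2:ℝ) = 2*π := by
    simp only [Real.one_rpow]
    rw [MeasureTheory.integral_const, measureReal_restrict_apply_univ,
      Real.volume_real_Ioo_of_le (by linarith [pi_pos]), smul_eq_mul, mul_one]
    ring
  rw [e1, e2] at hCS
  calc ∫ t in Ioo (-π) π, |f₀ (Real.sin (t/2)^2)|
      ≤ (∫ t in Ioo (-π) π, f₀ (Real.sin (t/2)^2)^2) ^ (1/(2:ℝ)) * (2*π) ^ (1/(2:ℝ)) := hCS
    _ = Real.sqrt (2*π) * Real.sqrt (∫ t in Ioo (-π) π, f₀ (Real.sin (t/2)^2)^2) := by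
        rw [← Real.sqrt_eq_rpow, ← Real.sqrt_eq_rpow]
        ring

private lemma arith_step (n : ℕ) {I : ℝ} (hI : 0 ≤ I) :
    Real.sqrt (2*(n:ℝ)+1) * ((1/(2*π)) * (Real.sqrt (2*π) * Real.sqrt (2*I)))
      = Real.sqrt ((2*(n:ℝ)+1)/π) * Real.sqrt I := by
  rw [← Real.sqrt_mul (by positivity : (0:ℝ) ≤ 2*π) (2*I),
    show (1:ℝ)/(2*π) = Real.sqrt ((1/(2*π))^2) from (Real.sqrt_sq (by positivity)).symm,
    ← Real.sqrt_mul (by positivity) _,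
    ← Real.sqrt_mul (by positivity : (0:ℝ) ≤ 2*(n:ℝ)+1) _,
    ← Real.sqrt_mul (by positivity : (0:ℝ) ≤ (2*(n:ℝ)+1)/π) I]
  congr 1
  field_simp

/-- If `g, g^ε ∈ L²_μ(0,1)` and `cₙ`, `cₙ^ε` are the Legendre coefficients obtained from the
Fourier coefficients of the corresponding auxiliary functions, then
`|cₙ − cₙ^ε| ≤ √((2n+1)/π) ‖g − g^ε‖_{L²_μ}`. -/
theorem coefficient_noise_bound (g ge : ℝ → ℝ)
    (hg : MemLp g 2 muMeas) (hge : MemLp ge 2 muMeas)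
    (c ce : ℕ → ℂ)
    (hc : ∀ n : ℕ, c n = (-1)^n * (Real.sqrt (2*n+1) : ℂ) *
      ∫ t in (-π)..π, etaP g t * Complex.exp (Complex.I * (n:ℂ) * (t:ℂ)))
    (hce : ∀ n : ℕ, ce n = (-1)^n * (Real.sqrt (2*n+1) : ℂ) *
      ∫ t in (-π)..π, etaP ge t * Complex.exp (Complex.I * (n:ℂ) * (t:ℂ))) :
    ∀ n : ℕ, ‖c n - ce n‖ ≤ Real.sqrt ((2*n+1)/π) *
      Real.sqrt (∫ x in Set.Ioo (0:ℝ) 1, (g x - ge x)^2 / Real.sqrt (x * (1 - x))) := by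

  intro n
  have hpi : (0:ℝ) < π := pi_pos
  have hg'm : Measurable (hg.1.mk g) := hg.1.stronglyMeasurable_mk.measurable
  have hge'm : Measurable (hge.1.mk ge) := hge.1.stronglyMeasurable_mk.measurable
  set g' : ℝ → ℝ := hg.1.mk g with hg'def
  set ge' : ℝ → ℝ := hge.1.mk ge with hge'def
  set d : ℝ → ℝ := fun x => g' x - ge' x with hddef
  have hgr : g =ᵐ[volume.restrict (Set.Ioo 0 1)] g' := ae_restrict_of_mu hg.1.ae_eq_mk
  have hger : ge =ᵐ[volume.restrict (Set.Ioo 0 1)] ge' := ae_restrict_of_mu hge.1.ae_eq_mk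
  have hg2 : MemLp g' 2 muMeas := hg.ae_eq hg.1.ae_eq_mk
  have hge2 : MemLp ge' 2 muMeas := hge.ae_eq hge.1.ae_eq_mk
  have hd2 : MemLp d 2 muMeas := hg2.sub hge2
  have hdm : Measurable d := hg'm.sub hge'm
  have hdr : (fun x => g x - ge x) =ᵐ[volume.restrict (Set.Ioo 0 1)] d := by
    filter_upwards [hgr, hger] with x h1 h2
    simp only [hddef]
    rw [h1, h2]
  obtain ⟨hIg, -⟩ := keyFull g' (integrableOn_of_memLp hg2)
  obtain ⟨hIge, -⟩ := keyFull ge' (integrableOn_of_memLp hge2)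
  obtain ⟨hId, hEd⟩ := keyFull d (integrableOn_of_memLp hd2)
  set I : ℝ := ∫ x in Set.Ioo (0:ℝ) 1, d x^2 / Real.sqrt (x*(1-x)) with hIdef
  have hInn : 0 ≤ I := setIntegral_nonneg measurableSet_Ioo
    (fun x _ => div_nonneg (sq_nonneg _) (Real.sqrt_nonneg _))
  have hRHS : ∫ x in Set.Ioo (0:ℝ) 1, (g x - ge x)^2 / Real.sqrt (x*(1-x)) = I := by
    apply integral_congr_ae
    filter_upwards [hdr] with x h1
    rw [show g x - ge x = d x from h1]
  have hcg := ae_comp_eq g g' hgr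
  have hcge := ae_comp_eq ge ge' hger
  have hIIg : IntervalIntegrable
      (fun t => etaP g t * Complex.exp (Complex.I * (n:ℂ) * (t:ℂ))) volume (-π) π :=
    (intervalIntegrable_iff_integrableOn_Ioo_of_le (by linarith)).2
      (integrable_term g g' n hg'm hcg hIg)
  have hIIge : IntervalIntegrable
      (fun t => etaP ge t * Complex.exp (Complex.I * (n:ℂ) * (t:ℂ))) volume (-π) π :=
    (intervalIntegrable_iff_integrableOn_Ioo_of_le (by linarith)).2
      (integrable_term ge ge' n hge'm hcge hIge)
  obtain ⟨-, habs⟩ := abs_comp_integrable d hdm hId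
  have hBint : IntervalIntegrable
      (fun t => 1/(2*π) * |d (Real.sin (t/2)^2)|) volume (-π) π :=
    (intervalIntegrable_iff_integrableOn_Ioo_of_le (by linarith)).2 (habs.const_mul _)
  have hresteq : volume.restrict (Set.Ioo (-π) π) = volume.restrict (Set.Ioc (-π) π) :=
    Measure.restrict_congr_set Ioo_ae_eq_Ioc
  have hnormle : ‖(∫ t in (-π)..π, etaP g t * Complex.exp (Complex.I*(n:ℂ)*(t:ℂ)))
      - ∫ t in (-π)..π, etaP ge t * Complex.exp (Complex.I*(n:ℂ)*(t:ℂ))‖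
      ≤ |∫ t in (-π)..π, 1/(2*π) * (abs (d (Real.sin (t/2)^2)))| := by
    rw [← intervalIntegral.integral_sub hIIg hIIge]
    apply intervalIntegral.norm_integral_le_abs_of_norm_le ?_ hBint
    rw [uIoc_of_le (by linarith : -π ≤ π), ← hresteq]
    filter_upwards [hcg, hcge, ae_restrict_mem measurableSet_Ioo] with t h1 h2 h3
    refine le_of_le_of_eq (eta_term_sub g ge n h3) ?_
    rw [show g (Real.sin (t/2)^2) = g' (Real.sin (t/2)^2) from h1,
      show ge (Real.sin (t/2)^2) = ge' (Real.sin (t/2)^2) from h2]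
  have hBnn : 0 ≤ ∫ t in (-π)..π, 1/(2*π) * |d (Real.sin (t/2)^2)| :=
    intervalIntegral.integral_nonneg (by linarith) (fun t _ => by positivity)
  have hBval : ∫ t in (-π)..π, 1/(2*π) * |d (Real.sin (t/2)^2)|
      = 1/(2*π) * ∫ t in Set.Ioo (-π) π, |d (Real.sin (t/2)^2)| := by
    rw [intervalIntegral.integral_const_mul,
      intervalIntegral.integral_of_le (by linarith : -π ≤ π), integral_Ioc_eq_integral_Ioo]
  have hCS := cauchy_schwarz_step d hdm hId
  rw [hc n, hce n, ← mul_sub, norm_mul]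
  have hn1 : ‖((-1:ℂ))^n * ((Real.sqrt (2*(n:ℝ)+1) : ℝ) : ℂ)‖ = Real.sqrt (2*(n:ℝ)+1) := by
    rw [norm_mul, norm_pow, norm_neg, norm_one, one_pow, one_mul, Complex.norm_real,
      Real.norm_eq_abs, abs_of_nonneg (Real.sqrt_nonneg _)]
  rw [hn1, hRHS]
  calc Real.sqrt (2*(n:ℝ)+1) * ‖(∫ t in (-π)..π, etaP g t * Complex.exp (Complex.I*(n:ℂ)*(t:ℂ)))
        - ∫ t in (-π)..π, etaP ge t * Complex.exp (Complex.I*(n:ℂ)*(t:ℂ))‖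
      ≤ Real.sqrt (2*(n:ℝ)+1) *
          (1/(2*π) * ∫ t in Set.Ioo (-π) π, |d (Real.sin (t/2)^2)|) := by
        apply mul_le_mul_of_nonneg_left ?_ (Real.sqrt_nonneg _)
        refine le_trans hnormle ?_
        rw [abs_of_nonneg hBnn, hBval]
    _ ≤ Real.sqrt (2*(n:ℝ)+1) *
          (1/(2*π) * (Real.sqrt (2*π)
            * Real.sqrt (∫ t in Set.Ioo (-π) π, d (Real.sin (t/2)^2)^2))) := by
        apply mul_le_mul_of_nonneg_left ?_ (Real.sqrt_nonneg _)
        exact mul_le_mul_of_nonneg_left hCS (by positivity)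
    _ = Real.sqrt (2*(n:ℝ)+1) * (1/(2*π) * (Real.sqrt (2*π) * Real.sqrt (2*I))) := by
        rw [hEd]
    _ = Real.sqrt ((2*(n:ℝ)+1)/π) * Real.sqrt I := arith_step n hInn

end helperLemmas
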